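/- Let (Z_n)_{n ≥ 0} be a Galton-Watson branching process with Z_0 = 1 whose offspring distribution has mean 1 and finite positive variance σ^2. Then n · P(Z_n > 0) → 2/σ^2 as n → ∞. -/

import Mathlib

open MeasureTheory ProbabilityTheory Filter Finset Topology

namespace KolmogorovAux


noncomputable def Qp (k : ℕ) (u : ℝ) : ℝ :=
  ∑ j ∈ Finset.range k, ∑ i ∈ Finset.range j, (1 - u) ^ i

lemma Qp_succ (k : ℕ) (u : ℝ) :
    Qp (k + 1) u = Qp k u + ∑ i ∈ Finset.range k, (1 - u) ^ i := by
  simp [Qp, Finset.sum_range_succ]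

lemma Qp_key (k : ℕ) (u : ℝ) :
    (1 - u) ^ k = 1 - k * u + u ^ 2 * Qp k u ∧
      (∑ i ∈ Finset.range k, (1 - u) ^ i) = k - u * Qp k u := by
  induction k with
  | zero => simp [Qp]
  | succ k ih =>
    obtain ⟨h1, h2⟩ := ih
    constructor
    · rw [pow_succ, h1, Qp_succ, h2]
      push_cast
      ring
    · rw [Finset.sum_range_succ, h1, h2, Qp_succ, h2]
      push_cast
      ring

lemma Qp_nonneg (k : ℕ) {u : ℝ} (hu : u ≤ 1) : 0 ≤ Qp k u := by
  apply Finset.sum_nonneg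
  intro j _
  apply Finset.sum_nonneg
  intro i _
  exact pow_nonneg (by linarith) _

lemma Qp_le (k : ℕ) {u : ℝ} (h0 : 0 ≤ u) (h1 : u ≤ 1) : Qp k u ≤ (k : ℝ) ^ 2 := by
  have : Qp k u ≤ ∑ j ∈ Finset.range k, (k : ℝ) := by
    apply Finset.sum_le_sum
    intro j hj
    calc ∑ i ∈ Finset.range j, (1 - u) ^ i ≤ ∑ i ∈ Finset.range j, 1 := by
          apply Finset.sum_le_sum
          intro i _
          exact pow_le_one₀ (by linarith) (by linarith)
      _ = (j : ℝ) := by simp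
      _ ≤ (k : ℝ) := by
          exact_mod_cast (Finset.mem_range.mp hj).le
  simpa [sq] using this.trans (by simp [sq])

lemma Qp_zero (k : ℕ) : Qp k 0 = (k : ℝ) * ((k : ℝ) - 1) / 2 := by
  have : Qp k 0 = ∑ j ∈ Finset.range k, (j : ℝ) := by
    simp [Qp]
  rw [this]; clear this
  induction k with
  | zero => simp
  | succ k ih => rw [Finset.sum_range_succ, ih]; push_cast; ring


lemma meas_sum {Ω : Type*} {m : MeasurableSpace Ω} {A : Ω → ℕ} (hA : Measurable[m] A)
    {g : ℕ → Ω → ℕ} (hg : ∀ i, Measurable[m] (g i)) :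
    Measurable[m] (fun ω => ∑ i ∈ Finset.range (A ω), g i ω) := by
  apply measurable_to_countable'
  intro v
  have hset : (fun ω => ∑ i ∈ Finset.range (A ω), g i ω) ⁻¹' {v}
      = ⋃ mm : ℕ, ({ω | A ω = mm} ∩ {ω | (∑ i ∈ Finset.range mm, g i ω) = v}) := by
    ext ω
    simp only [Set.mem_preimage, Set.mem_singleton_iff, Set.mem_iUnion, Set.mem_inter_iff,
      Set.mem_setOf_eq]
    constructor
    · intro h; exact ⟨A ω, rfl, h⟩
    · rintro ⟨mm, h1, h2⟩; rw [h1]; exact h2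
  rw [hset]
  exact MeasurableSet.iUnion fun mm =>
    (hA (measurableSet_singleton mm)).inter
      ((Finset.measurable_sum _ fun i _ => hg i) (measurableSet_singleton v))

/-- The generating function of the offspring law, on `ℝ≥0∞`. -/
noncomputable def F (μ : Measure ℕ) (s : ENNReal) : ENNReal := ∫⁻ k, s ^ k ∂μ

/-- comap σ-algebra of coordinate `p`. -/
def mco {Ω : Type*} (ξ : ℕ → ℕ → Ω → ℕ) (p : ℕ × ℕ) : MeasurableSpace Ω :=
  MeasurableSpace.comap (ξ p.1 p.2) inferInstance

/-- σ-algebra generated by generations `< n`. -/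
def MA {Ω : Type*} (ξ : ℕ → ℕ → Ω → ℕ) (n : ℕ) : MeasurableSpace Ω :=
  ⨆ p ∈ {p : ℕ × ℕ | p.1 < n}, mco ξ p

lemma meas_xi_pow {Ω : Type*} (ξ : ℕ → ℕ → Ω → ℕ) (s : ENNReal) (n i : ℕ) :
    Measurable[mco ξ (n, i)] (fun ω => s ^ ξ n i ω) :=
  (Measurable.of_discrete (f := fun k : ℕ => s ^ k)).comp (Measurable.of_comap_le le_rfl)

section

variable {Ω : Type*} [mΩ : MeasurableSpace Ω] (P : Measure Ω) [IsProbabilityMeasure P]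
    (ξ : ℕ → ℕ → Ω → ℕ) (hmeas : ∀ n i, Measurable (ξ n i))
    (hindep : iIndepFun (fun p : ℕ × ℕ => ξ p.1 p.2) P)
    (μ : Measure ℕ) [IsProbabilityMeasure μ]
    (hdist : ∀ n i, Measure.map (ξ n i) P = μ)
    (Z : ℕ → Ω → ℕ)
    (hZ0 : ∀ ω, Z 0 ω = 1)
    (hZrec : ∀ n ω, Z (n + 1) ω = ∑ i ∈ Finset.range (Z n ω), ξ n i ω)

omit [IsProbabilityMeasure P] in
include hZ0 hZrec in
lemma Z_measurable_le (n : ℕ) : Measurable[MA ξ n] (Z n) := by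
  induction n with
  | zero =>
    have : Z 0 = fun _ => 1 := funext hZ0
    rw [this]; exact measurable_const
  | succ n ih =>
    have hle : MA ξ n ≤ MA ξ (n + 1) := by
      apply biSup_mono
      intro p hp; exact Nat.lt_succ_of_lt hp
    have hA : Measurable[MA ξ (n + 1)] (Z n) := ih.mono hle le_rfl
    have hg : ∀ i, Measurable[MA ξ (n + 1)] (ξ n i) := by
      intro i
      have h1 : mco ξ (n, i) ≤ MA ξ (n + 1) :=
        le_biSup (mco ξ) (show ((n, i) : ℕ × ℕ) ∈ {p : ℕ × ℕ | p.1 < n + 1}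
          from Nat.lt_succ_self n)
      exact (Measurable.of_comap_le le_rfl).mono h1 le_rfl
    have : Z (n + 1) = fun ω => ∑ i ∈ Finset.range (Z n ω), ξ n i ω := funext (hZrec n)
    rw [this]
    exact meas_sum hA hg

omit [IsProbabilityMeasure P] in
include hmeas hZ0 hZrec in
lemma Z_measurable (n : ℕ) : Measurable (Z n) :=
  (Z_measurable_le ξ Z hZ0 hZrec n).mono
    (iSup₂_le fun p _ => (hmeas p.1 p.2).comap_le) le_rfl

include hmeas hindep hdist hZ0 hZrec in
lemma pgf_step (n : ℕ) (s : ENNReal) :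
    ∫⁻ ω, s ^ Z (n + 1) ω ∂P = ∫⁻ ω, (F μ s) ^ Z n ω ∂P := by
  classical
  have hm'le : ∀ p, mco ξ p ≤ mΩ := fun p => (hmeas p.1 p.2).comap_le
  have hiind : iIndep (mco ξ) P := hindep
  have hMAle : MA ξ n ≤ mΩ := iSup₂_le fun p _ => hm'le p
  have hZn : Measurable[MA ξ n] (Z n) := Z_measurable_le ξ Z hZ0 hZrec n
  have hZnfull : Measurable (Z n) := hZn.mono hMAle le_rfl
  -- pointwise decomposition
  have hpt : ∀ ω, s ^ Z (n + 1) ω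
      = ∑' mm : ℕ, ({ω' | Z n ω' = mm}.indicator (fun _ => (1 : ENNReal)) ω)
          * ∏ i ∈ Finset.range mm, s ^ ξ n i ω := by
    intro ω
    rw [tsum_eq_single (Z n ω) ?_]
    · simp only [Set.indicator_of_mem (show ω ∈ {ω' | Z n ω' = Z n ω} from rfl), one_mul]
      rw [Finset.prod_pow_eq_pow_sum]
      rw [hZrec n ω]
    · intro mm hmm
      rw [Set.indicator_of_notMem (by simpa using (Ne.symm hmm)), zero_mul]
  have hmeas_pow : ∀ i : ℕ, Measurable fun ω => s ^ ξ n i ω := by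
    intro i
    exact (Measurable.of_discrete (f := fun k : ℕ => s ^ k)).comp (hmeas n i)
  -- integral of the product over i < mm
  have hprod : ∀ mm : ℕ,
      ∫⁻ ω, ∏ i ∈ Finset.range mm, s ^ ξ n i ω ∂P = (F μ s) ^ mm := by
    intro mm
    induction mm with
    | zero => simp
    | succ mm ihm =>
      have hsets0 : Indep (⨆ p ∈ {p : ℕ × ℕ | p.1 = n ∧ p.2 < mm}, mco ξ p)
          (⨆ p ∈ ({(n, mm)} : Set (ℕ × ℕ)), mco ξ p) P := by
        apply indep_iSup_of_disjoint hm'le hiind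
        rw [Set.disjoint_left]
        rintro ⟨a, b⟩ ⟨ha, hb⟩ hmem
        simp only [Set.mem_singleton_iff, Prod.mk.injEq] at hmem
        omega
      have hsets : Indep (⨆ p ∈ {p : ℕ × ℕ | p.1 = n ∧ p.2 < mm}, mco ξ p)
          (mco ξ (n, mm)) P := by
        rwa [_root_.iSup_singleton] at hsets0
      have hprodmeas : Measurable[⨆ p ∈ {p : ℕ × ℕ | p.1 = n ∧ p.2 < mm}, mco ξ p]
          (fun ω => ∏ i ∈ Finset.range mm, s ^ ξ n i ω) := by
        apply Finset.measurable_prod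
        intro i hi
        have h1 : mco ξ (n, i) ≤ ⨆ p ∈ {p : ℕ × ℕ | p.1 = n ∧ p.2 < mm}, mco ξ p :=
          le_biSup (mco ξ) (show ((n, i) : ℕ × ℕ) ∈ {p : ℕ × ℕ | p.1 = n ∧ p.2 < mm}
            from ⟨rfl, Finset.mem_range.mp hi⟩)
        exact (meas_xi_pow ξ s n i).mono h1 le_rfl
      have hFs : ∫⁻ ω, s ^ ξ n mm ω ∂P = F μ s := by
        rw [F, ← hdist n mm, lintegral_map (Measurable.of_discrete) (hmeas n mm)]
      calc ∫⁻ ω, ∏ i ∈ Finset.range (mm + 1), s ^ ξ n i ω ∂P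
          = ∫⁻ ω, (∏ i ∈ Finset.range mm, s ^ ξ n i ω) * s ^ ξ n mm ω ∂P := by
            congr 1; ext ω; rw [Finset.prod_range_succ]
        _ = (∫⁻ ω, ∏ i ∈ Finset.range mm, s ^ ξ n i ω ∂P) * ∫⁻ ω, s ^ ξ n mm ω ∂P :=
            lintegral_mul_eq_lintegral_mul_lintegral_of_independent_measurableSpace
              (iSup₂_le fun p _ => hm'le p) (hm'le (n, mm)) hsets hprodmeas
              (meas_xi_pow ξ s n mm)
        _ = (F μ s) ^ mm * (F μ s) := by rw [ihm, hFs]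
        _ = (F μ s) ^ (mm + 1) := by rw [pow_succ]
  -- independence of {Z n = mm} and the product
  have hAB : Indep (MA ξ n) (⨆ p ∈ {p : ℕ × ℕ | p.1 = n}, mco ξ p) P := by
    apply indep_iSup_of_disjoint hm'le hiind
    rw [Set.disjoint_left]
    rintro ⟨a, b⟩ ha hb
    simp only [Set.mem_setOf_eq] at ha hb
    omega
  have hterm : ∀ mm : ℕ,
      ∫⁻ ω, ({ω' | Z n ω' = mm}.indicator (fun _ => (1 : ENNReal)) ω)
          * ∏ i ∈ Finset.range mm, s ^ ξ n i ω ∂P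
      = P {ω' | Z n ω' = mm} * (F μ s) ^ mm := by
    intro mm
    have hindmeas : Measurable[MA ξ n] ({ω' | Z n ω' = mm}.indicator (fun _ => (1 : ENNReal))) :=
      measurable_const.indicator (hZn (measurableSet_singleton mm))
    have hprodmeas : Measurable[⨆ p ∈ {p : ℕ × ℕ | p.1 = n}, mco ξ p]
        (fun ω => ∏ i ∈ Finset.range mm, s ^ ξ n i ω) := by
      apply Finset.measurable_prod
      intro i _
      have h1 : mco ξ (n, i) ≤ ⨆ p ∈ {p : ℕ × ℕ | p.1 = n}, mco ξ p :=
        le_biSup (mco ξ) (show ((n, i) : ℕ × ℕ) ∈ {p : ℕ × ℕ | p.1 = n} from rfl)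
      exact (meas_xi_pow ξ s n i).mono h1 le_rfl
    rw [lintegral_mul_eq_lintegral_mul_lintegral_of_independent_measurableSpace
      hMAle (iSup₂_le fun p _ => hm'le p) hAB hindmeas hprodmeas]
    rw [hprod mm]
    congr 1
    have hms : MeasurableSet {ω' | Z n ω' = mm} := hZnfull (measurableSet_singleton mm)
    rw [lintegral_indicator_const hms, one_mul]
  -- put it together
  have lhs_eq : ∫⁻ ω, s ^ Z (n + 1) ω ∂P
      = ∑' mm : ℕ, P {ω' | Z n ω' = mm} * (F μ s) ^ mm := by
    calc ∫⁻ ω, s ^ Z (n + 1) ω ∂P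
        = ∫⁻ ω, ∑' mm : ℕ, ({ω' | Z n ω' = mm}.indicator (fun _ => (1 : ENNReal)) ω)
            * ∏ i ∈ Finset.range mm, s ^ ξ n i ω ∂P := by
          congr 1; ext ω; exact hpt ω
      _ = ∑' mm : ℕ, ∫⁻ ω, ({ω' | Z n ω' = mm}.indicator (fun _ => (1 : ENNReal)) ω)
            * ∏ i ∈ Finset.range mm, s ^ ξ n i ω ∂P := by
          apply lintegral_tsum
          intro mm
          exact ((measurable_const.indicator (hZnfull (measurableSet_singleton mm))).mul
            (Finset.measurable_prod _ fun i _ => hmeas_pow i)).aemeasurable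
      _ = ∑' mm : ℕ, P {ω' | Z n ω' = mm} * (F μ s) ^ mm := by
          congr 1; ext mm; exact hterm mm
  have rhs_eq : ∫⁻ ω, (F μ s) ^ Z n ω ∂P
      = ∑' mm : ℕ, P {ω' | Z n ω' = mm} * (F μ s) ^ mm := by
    have hpt2 : ∀ ω, (F μ s) ^ Z n ω
        = ∑' mm : ℕ, ({ω' | Z n ω' = mm}.indicator (fun _ => (F μ s) ^ mm) ω) := by
      intro ω
      rw [tsum_eq_single (Z n ω) ?_]
      · rw [Set.indicator_of_mem (show ω ∈ {ω' | Z n ω' = Z n ω} from rfl)]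
      · intro mm hmm
        rw [Set.indicator_of_notMem (by simpa using (Ne.symm hmm))]
    calc ∫⁻ ω, (F μ s) ^ Z n ω ∂P
        = ∫⁻ ω, ∑' mm : ℕ, ({ω' | Z n ω' = mm}.indicator (fun _ => (F μ s) ^ mm) ω) ∂P := by
          congr 1; ext ω; exact hpt2 ω
      _ = ∑' mm : ℕ, ∫⁻ ω, ({ω' | Z n ω' = mm}.indicator (fun _ => (F μ s) ^ mm) ω) ∂P := by
          apply lintegral_tsum
          intro mm
          exact (measurable_const.indicator (hZnfull (measurableSet_singleton mm))).aemeasurable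
      _ = ∑' mm : ℕ, P {ω' | Z n ω' = mm} * (F μ s) ^ mm := by
          congr 1; ext mm
          have hms : MeasurableSet {ω' | Z n ω' = mm} := hZnfull (measurableSet_singleton mm)
          rw [lintegral_indicator_const hms, mul_comm]
  rw [lhs_eq, rhs_eq]

include hmeas hindep hdist hZ0 hZrec in
lemma pgf_iterate (n : ℕ) (s : ENNReal) :
    ∫⁻ ω, s ^ Z n ω ∂P = (F μ)^[n] s := by
  induction n generalizing s with
  | zero =>
    simp only [Function.iterate_zero, id_eq]
    have : ∀ ω, s ^ Z 0 ω = s := by intro ω; rw [hZ0 ω, pow_one]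
    simp only [this]
    simp
  | succ n ih =>
    rw [pgf_step P ξ hmeas hindep μ hdist Z hZ0 hZrec n s, ih (F μ s),
      Function.iterate_succ_apply]

end

end KolmogorovAux

open KolmogorovAux

/-- Kolmogorov's estimate for critical Galton-Watson processes: if the offspring law has
mean `1` and finite positive variance `σ²`, then `n · P(Zₙ > 0) → 2/σ²`. -/
theorem kolmogorov_survival_estimate
    {Ω : Type*} [MeasurableSpace Ω] (P : Measure Ω) [IsProbabilityMeasure P]
    (ξ : ℕ → ℕ → Ω → ℕ) (hmeas : ∀ n i, Measurable (ξ n i))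
    (hindep : iIndepFun (fun p : ℕ × ℕ => ξ p.1 p.2) P)
    (μ : Measure ℕ) [IsProbabilityMeasure μ]
    (hdist : ∀ n i, Measure.map (ξ n i) P = μ)
    (hmom : Integrable (fun k : ℕ => (k : ℝ) ^ 2) μ)
    (hmean : ∫ k, (k : ℝ) ∂μ = 1)
    (σ2 : ℝ) (hσ2 : 0 < σ2)
    (hvar : ∫ k, ((k : ℝ) - 1) ^ 2 ∂μ = σ2)
    (Z : ℕ → Ω → ℕ)
    (hZ0 : ∀ ω, Z 0 ω = 1)
    (hZrec : ∀ n ω, Z (n + 1) ω = ∑ i ∈ Finset.range (Z n ω), ξ n i ω) :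
    Tendsto (fun n : ℕ => (n : ℝ) * (P {ω | 0 < Z n ω}).toReal) atTop (nhds (2 / σ2)) := by
  classical
  have hZm : ∀ n, Measurable (Z n) := Z_measurable ξ hmeas Z hZ0 hZrec
  -- basic integrability facts
  have hmeasnat : ∀ (g : ℕ → ℝ), AEStronglyMeasurable g μ :=
    fun g => (Measurable.of_discrete (f := g)).aestronglyMeasurable
  have hInt1 : Integrable (fun _ : ℕ => (1 : ℝ)) μ := integrable_const 1
  have hInt_k : Integrable (fun k : ℕ => (k : ℝ)) μ := by
    apply Integrable.mono' (hInt1.add hmom) (hmeasnat _)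
    filter_upwards with k
    have h0 : (0:ℝ) ≤ (k:ℝ) := Nat.cast_nonneg k
    rw [Real.norm_eq_abs, abs_of_nonneg h0]
    simp only [Pi.add_apply]
    nlinarith [sq_nonneg ((k:ℝ) - 1)]
  have hIntPow : ∀ t : ℝ, 0 ≤ t → t ≤ 1 → Integrable (fun k : ℕ => t ^ k) μ := by
    intro t h0 h1
    apply Integrable.mono' hInt1 (hmeasnat _)
    filter_upwards with k
    rw [Real.norm_eq_abs, abs_of_nonneg (pow_nonneg h0 k)]
    exact pow_le_one₀ h0 h1
  have hIntQ : ∀ v : ℝ, 0 ≤ v → v ≤ 1 → Integrable (fun k : ℕ => Qp k v) μ := by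
    intro v h0 h1
    apply Integrable.mono' hmom (hmeasnat _)
    filter_upwards with k
    rw [Real.norm_eq_abs, abs_of_nonneg (Qp_nonneg k h1)]
    exact Qp_le k h0 h1
  have hIntsq : ∫ k, (k : ℝ) ^ 2 ∂μ = σ2 + 1 := by
    have he : (fun k : ℕ => ((k : ℝ) - 1) ^ 2)
        = fun k : ℕ => (k : ℝ) ^ 2 - (2 * (k : ℝ) - 1) := by
      funext k; ring
    have hsub : Integrable (fun k : ℕ => 2 * (k : ℝ) - 1) μ := (hInt_k.const_mul 2).sub hInt1
    rw [he] at hvar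
    rw [integral_sub hmom hsub] at hvar
    have h2 : ∫ k, (2 * (k : ℝ) - 1) ∂μ = 1 := by
      rw [integral_sub (hInt_k.const_mul 2) hInt1, integral_const_mul, hmean]
      simp [measure_univ]
      norm_num
    rw [h2] at hvar
    linarith
  -- the real generating function
  set fR : ℝ → ℝ := fun s => ∫ k, s ^ k ∂μ with hfR_def
  set D : ℝ → ℝ := fun v => ∫ k, Qp k v ∂μ with hD_def
  have hfR_nonneg : ∀ t : ℝ, 0 ≤ t → 0 ≤ fR t :=
    fun t h0 => integral_nonneg fun k => pow_nonneg h0 k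
  have hfR_eq : ∀ v : ℝ, 0 ≤ v → v ≤ 1 → fR (1 - v) = 1 - v + v ^ 2 * D v := by
    intro v h0 h1
    have he : (fun k : ℕ => (1 - v) ^ k)
        = fun k : ℕ => (1 - (k : ℝ) * v) + v ^ 2 * Qp k v := by
      funext k; rw [(Qp_key k v).1]
    have hint1 : Integrable (fun k : ℕ => 1 - (k : ℝ) * v) μ := hInt1.sub (hInt_k.mul_const v)
    have hint2 : Integrable (fun k : ℕ => v ^ 2 * Qp k v) μ := (hIntQ v h0 h1).const_mul _
    rw [hfR_def]
    simp only []
    rw [he, integral_add hint1 hint2, integral_sub hInt1 (hInt_k.mul_const v),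
      integral_mul_const, hmean, integral_const_mul]
    simp [measure_univ]
    exact Or.inl rfl
  have hD_nonneg : ∀ v : ℝ, v ≤ 1 → 0 ≤ D v :=
    fun v h1 => integral_nonneg fun k => Qp_nonneg k h1
  -- existence of atoms
  have hk0 : ∃ k0 : ℕ, k0 ≠ 0 ∧ μ {k0} ≠ 0 := by
    by_contra h
    push_neg at h
    have hS : μ {k : ℕ | k ≠ 0} = 0 := by
      rw [← Set.biUnion_of_singleton {k : ℕ | k ≠ 0}]
      rw [measure_biUnion_null_iff (Set.to_countable _)]
      exact fun k hk => h k hk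
    have hae : (fun k : ℕ => (k : ℝ)) =ᵐ[μ] 0 := by
      rw [Filter.EventuallyEq, ae_iff]
      convert hS using 2
      ext k
      simp [Nat.cast_eq_zero]
    rw [integral_eq_zero_of_ae hae] at hmean
    norm_num at hmean
  have hk1 : ∃ k1 : ℕ, 2 ≤ k1 ∧ μ {k1} ≠ 0 := by
    by_contra h
    push_neg at h
    have hS : μ {k : ℕ | 2 ≤ k} = 0 := by
      rw [← Set.biUnion_of_singleton {k : ℕ | 2 ≤ k}]
      rw [measure_biUnion_null_iff (Set.to_countable _)]
      exact fun k hk => h k hk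
    have hae : ∀ᵐ k ∂μ, k < 2 := by
      rw [ae_iff]
      convert hS using 2
      ext k
      simp [Nat.lt_iff_add_one_le, not_lt]
    have hcongr : (fun k : ℕ => ((k : ℝ) - 1) ^ 2) =ᵐ[μ] fun k : ℕ => 1 - (k : ℝ) := by
      filter_upwards [hae] with k hk
      interval_cases k <;> norm_num
    rw [integral_congr_ae hcongr, integral_sub hInt1 hInt_k, hmean] at hvar
    simp only [integral_const, measure_univ, ENNReal.toReal_one, smul_eq_mul, one_mul, probReal_univ] at hvar
    linarith
  obtain ⟨k0, hk0_ne, hk0_pos⟩ := hk0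
  obtain ⟨k1, hk1_ge, hk1_pos⟩ := hk1
  -- strict inequality fR t < 1 for t < 1
  have hfRlt1 : ∀ t : ℝ, 0 ≤ t → t < 1 → fR t < 1 := by
    intro t h0 h1
    have hint : Integrable (fun k : ℕ => 1 - t ^ k) μ := hInt1.sub (hIntPow t h0 h1.le)
    have hpos : 0 < ∫ k, (1 - t ^ k) ∂μ := by
      rw [integral_pos_iff_support_of_nonneg
        (fun k => sub_nonneg.2 (pow_le_one₀ h0 h1.le)) hint]
      have hmem : k0 ∈ Function.support fun k : ℕ => 1 - t ^ k := by
        simp only [Function.mem_support]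
        have : t ^ k0 < 1 := pow_lt_one₀ h0 h1 hk0_ne
        intro hc; rw [sub_eq_zero] at hc; exact absurd hc.symm (ne_of_lt this)
      calc (0 : ENNReal) < μ {k0} := pos_iff_ne_zero.2 hk0_pos
        _ ≤ μ (Function.support fun k : ℕ => 1 - t ^ k) :=
            measure_mono (Set.singleton_subset_iff.2 hmem)
    have : 1 - fR t = ∫ k, (1 - t ^ k) ∂μ := by
      rw [integral_sub hInt1 (hIntPow t h0 h1.le)]
      simp [measure_univ]
      rfl
    linarith
  -- strict positivity of D
  have hDpos : ∀ v : ℝ, 0 ≤ v → v ≤ 1 → 0 < D v := by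
    intro v h0 h1
    rw [hD_def]
    simp only []
    rw [integral_pos_iff_support_of_nonneg (fun k => Qp_nonneg k h1) (hIntQ v h0 h1)]
    have hmem : k1 ∈ Function.support fun k : ℕ => Qp k v := by
      simp only [Function.mem_support]
      have h2 : (1 : ℝ) ≤ Qp k1 v := by
        have : ∑ i ∈ Finset.range 1, (1 - v) ^ i = 1 := by simp
        calc (1 : ℝ) = ∑ i ∈ Finset.range 1, (1 - v) ^ i := this.symm
          _ ≤ Qp k1 v := by
            apply Finset.single_le_sum
              (f := fun j => ∑ i ∈ Finset.range j, (1 - v) ^ i)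
            · intro j _
              exact Finset.sum_nonneg fun i _ => pow_nonneg (by linarith) i
            · exact Finset.mem_range.mpr (by omega)
      positivity
    calc (0 : ENNReal) < μ {k1} := pos_iff_ne_zero.2 hk1_pos
      _ ≤ μ (Function.support fun k : ℕ => Qp k v) :=
          measure_mono (Set.singleton_subset_iff.2 hmem)
  -- extinction probabilities
  set q : ℕ → ENNReal := fun n => P {ω | Z n ω = 0} with hq_def
  have hq_ne_top : ∀ n, q n ≠ ⊤ := fun n => measure_ne_top P _
  have hq_le_one : ∀ n, q n ≤ 1 := fun n => prob_le_one
  have hq_lint : ∀ n, ∫⁻ ω, (0 : ENNReal) ^ Z n ω ∂P = q n := by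
    intro n
    have hpt : ∀ ω, (0 : ENNReal) ^ Z n ω
        = {ω' | Z n ω' = 0}.indicator (fun _ => (1 : ENNReal)) ω := by
      intro ω
      by_cases h : Z n ω = 0
      · rw [h, pow_zero,
          Set.indicator_of_mem (show ω ∈ {ω' | Z n ω' = 0} from h) (fun _ => (1 : ENNReal))]
      · rw [zero_pow h,
          Set.indicator_of_notMem (show ω ∉ {ω' | Z n ω' = 0} from h) (fun _ => (1 : ENNReal))]
    have hms : MeasurableSet {ω' | Z n ω' = 0} := hZm n (measurableSet_singleton 0)
    calc ∫⁻ ω, (0 : ENNReal) ^ Z n ω ∂P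
        = ∫⁻ ω, {ω' | Z n ω' = 0}.indicator (fun _ => (1 : ENNReal)) ω ∂P := by
          congr 1; ext ω; exact hpt ω
      _ = q n := by rw [lintegral_indicator_const hms, one_mul]
  have hqrec : ∀ n, q (n + 1) = F μ (q n) := by
    intro n
    calc q (n + 1) = (F μ)^[n + 1] 0 := by
          rw [← hq_lint (n + 1), pgf_iterate P ξ hmeas hindep μ hdist Z hZ0 hZrec (n + 1) 0]
      _ = F μ ((F μ)^[n] 0) := Function.iterate_succ_apply' _ _ _
      _ = F μ (q n) := by
          rw [← hq_lint n, pgf_iterate P ξ hmeas hindep μ hdist Z hZ0 hZrec n 0]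
  -- real extinction probabilities
  set qr : ℕ → ℝ := fun n => (q n).toReal with hqr_def
  have hqr_mem : ∀ n, 0 ≤ qr n ∧ qr n ≤ 1 := by
    intro n
    exact ⟨ENNReal.toReal_nonneg, by
      rw [hqr_def]
      calc (q n).toReal ≤ (1 : ENNReal).toReal :=
        ENNReal.toReal_mono (by norm_num) (hq_le_one n)
        _ = 1 := by norm_num⟩
  have hF_ofReal : ∀ t : ℝ, 0 ≤ t → t ≤ 1 → F μ (ENNReal.ofReal t) = ENNReal.ofReal (fR t) := by
    intro t h0 h1
    rw [F]
    have he : ∀ k : ℕ, (ENNReal.ofReal t) ^ k = ENNReal.ofReal (t ^ k) :=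
      fun k => (ENNReal.ofReal_pow h0 k).symm
    calc ∫⁻ k, (ENNReal.ofReal t) ^ k ∂μ = ∫⁻ k, ENNReal.ofReal (t ^ k) ∂μ := by
          congr 1; ext k; exact he k
      _ = ENNReal.ofReal (fR t) :=
          (ofReal_integral_eq_lintegral_ofReal (hIntPow t h0 h1)
            (ae_of_all _ fun k => pow_nonneg h0 k)).symm
  have hqr_rec : ∀ n, qr (n + 1) = fR (qr n) := by
    intro n
    have h1 : q n = ENNReal.ofReal (qr n) := (ENNReal.ofReal_toReal (hq_ne_top n)).symm
    rw [hqr_def]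
    simp only []
    rw [hqrec n, h1, hF_ofReal (qr n) (hqr_mem n).1 (hqr_mem n).2,
      ENNReal.toReal_ofReal (hfR_nonneg _ (hqr_mem n).1)]
    rw [ENNReal.toReal_ofReal (hqr_mem n).1]
  -- survival probabilities
  set u : ℕ → ℝ := fun n => (P {ω | 0 < Z n ω}).toReal with hu_def
  have hu_eq : ∀ n, u n = 1 - qr n := by
    intro n
    have hset : {ω | 0 < Z n ω} = {ω | Z n ω = 0}ᶜ := by
      ext ω; simp [Nat.pos_iff_ne_zero]
    rw [hu_def]
    simp only []
    have hms : MeasurableSet {ω' | Z n ω' = 0} := hZm n (measurableSet_singleton 0)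
    rw [hset, prob_compl_eq_one_sub hms]
    exact ENNReal.toReal_sub_of_le (hq_le_one n) (by norm_num)
  have hu_mem : ∀ n, 0 ≤ u n ∧ u n ≤ 1 := by
    intro n
    rw [hu_eq n]
    exact ⟨by linarith [(hqr_mem n).2], by linarith [(hqr_mem n).1]⟩
  have hu_rec : ∀ n, u (n + 1) = 1 - fR (1 - u n) := by
    intro n
    rw [hu_eq (n + 1), hqr_rec n]
    congr 2
    rw [hu_eq n]; ring
  have hu_rec' : ∀ n, u (n + 1) = u n - (u n) ^ 2 * D (u n) := by
    intro n
    rw [hu_rec n, hfR_eq (u n) (hu_mem n).1 (hu_mem n).2]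
    ring
  have hu0 : u 0 = 1 := by
    have hset : {ω | 0 < Z 0 ω} = Set.univ := by
      ext ω; simp [hZ0 ω]
    rw [hu_def]
    simp only [hset, measure_univ, ENNReal.toReal_one]
  have hu_pos : ∀ n, 0 < u n := by
    intro n
    induction n with
    | zero => rw [hu0]; norm_num
    | succ n ih =>
      rw [hu_rec n]
      have h1 : fR (1 - u n) < 1 :=
        hfRlt1 (1 - u n) (by linarith [(hu_mem n).2]) (by linarith)
      linarith
  have hu_anti : Antitone u := by
    apply antitone_nat_of_succ_le
    intro n
    rw [hu_rec' n]
    have : 0 ≤ (u n) ^ 2 * D (u n) :=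
      mul_nonneg (sq_nonneg _) (hD_nonneg _ (hu_mem n).2)
    linarith
  -- convergence of u to 0
  have hbdd : BddBelow (Set.range u) := ⟨0, fun x ⟨n, hn⟩ => hn ▸ (hu_mem n).1⟩
  set L : ℝ := ⨅ n, u n with hL_def
  have hL_tendsto : Tendsto u atTop (𝓝 L) := tendsto_atTop_ciInf hu_anti hbdd
  have hL_nonneg : 0 ≤ L := le_ciInf fun n => (hu_mem n).1
  have hL_le_one : L ≤ 1 := le_trans (ciInf_le hbdd 0) (hu_mem 0).2
  -- continuity of D along sequences in [0,1]
  have hDcont : ∀ (v : ℕ → ℝ) (L' : ℝ), (∀ n, 0 ≤ v n ∧ v n ≤ 1) →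
      Tendsto v atTop (𝓝 L') → Tendsto (fun n => D (v n)) atTop (𝓝 (D L')) := by
    intro v L' hv htend
    apply tendsto_integral_of_dominated_convergence (fun k : ℕ => (k : ℝ) ^ 2)
      (fun n => hmeasnat _) hmom
    · intro n
      filter_upwards with k
      rw [Real.norm_eq_abs, abs_of_nonneg (Qp_nonneg k (hv n).2)]
      exact Qp_le k (hv n).1 (hv n).2
    · filter_upwards with k
      simp only [Qp]
      apply tendsto_finset_sum
      intro j _
      apply tendsto_finset_sum
      intro i _
      exact ((tendsto_const_nhds.sub htend).pow i)
  have hL0 : L = 0 := by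
    by_contra hne
    have hLpos : 0 < L := lt_of_le_of_ne hL_nonneg (Ne.symm hne)
    have h1 : Tendsto (fun n => u (n + 1)) atTop (𝓝 L) :=
      hL_tendsto.comp (tendsto_add_atTop_nat 1)
    have h2 : Tendsto (fun n => u n - (u n) ^ 2 * D (u n)) atTop
        (𝓝 (L - L ^ 2 * D L)) := by
      apply Tendsto.sub hL_tendsto
      exact ((hL_tendsto.pow 2).mul (hDcont u L hu_mem hL_tendsto))
    have h3 : Tendsto (fun n => u (n + 1)) atTop (𝓝 (L - L ^ 2 * D L)) := by
      apply h2.congr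
      intro n
      exact (hu_rec' n).symm
    have h4 : L = L - L ^ 2 * D L := tendsto_nhds_unique h1 h3
    have h5 : L ^ 2 * D L = 0 := by linarith
    have h6 : 0 < L ^ 2 * D L :=
      mul_pos (pow_pos hLpos 2) (hDpos L hL_nonneg hL_le_one)
    linarith
  rw [hL0] at hL_tendsto
  -- the increments of 1/u converge to σ2/2
  have hD0 : D 0 = σ2 / 2 := by
    rw [hD_def]
    simp only []
    have he : (fun k : ℕ => Qp k 0) = fun k : ℕ => ((k : ℝ) ^ 2 - (k : ℝ)) / 2 := by
      funext k; rw [Qp_zero]; ring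
    rw [he]
    have : Integrable (fun k : ℕ => (k : ℝ) ^ 2 - (k : ℝ)) μ := hmom.sub hInt_k
    rw [integral_div, integral_sub hmom hInt_k, hIntsq, hmean]
    ring
  have hDu_tendsto : Tendsto (fun n => D (u n)) atTop (𝓝 (σ2 / 2)) := by
    rw [← hD0]
    exact hDcont u 0 hu_mem hL_tendsto
  have huDu : Tendsto (fun n => u n * D (u n)) atTop (𝓝 0) := by
    have := hL_tendsto.mul hDu_tendsto
    simpa using this
  set d : ℕ → ℝ := fun n => D (u n) / (1 - u n * D (u n)) with hd_def
  have hd_tendsto : Tendsto d atTop (𝓝 (σ2 / 2)) := by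
    have h1 : Tendsto (fun n => 1 - u n * D (u n)) atTop (𝓝 1) := by
      have := (tendsto_const_nhds (x := (1:ℝ)) (f := atTop)).sub huDu
      simpa using this
    have := hDu_tendsto.div h1 one_ne_zero
    rw [div_one] at this
    exact this
  have hfrac_pos : ∀ n, 0 < 1 - u n * D (u n) := by
    intro n
    have h2 : u (n + 1) = u n * (1 - u n * D (u n)) := by rw [hu_rec' n]; ring
    have h3 : 0 < u n * (1 - u n * D (u n)) := h2 ▸ hu_pos (n + 1)
    by_contra h
    push_neg at h
    have h4 : u n * (1 - u n * D (u n)) ≤ 0 :=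
      mul_nonpos_of_nonneg_of_nonpos (hu_pos n).le h
    linarith
  have hd_eq : ∀ n, (u (n + 1))⁻¹ - (u n)⁻¹ = d n := by
    intro n
    have h2 : u (n + 1) = u n * (1 - u n * D (u n)) := by rw [hu_rec' n]; ring
    rw [hd_def]
    simp only []
    rw [h2]
    have hun : u n ≠ 0 := (hu_pos n).ne'
    have hfr : 1 - u n * D (u n) ≠ 0 := (hfrac_pos n).ne'
    field_simp
    ring
  -- Cesàro
  have hcesaro : Tendsto (fun n : ℕ => ((n : ℝ))⁻¹ * ∑ i ∈ Finset.range n, d i)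
      atTop (𝓝 (σ2 / 2)) := hd_tendsto.cesaro
  have hsum : ∀ n, ∑ i ∈ Finset.range n, d i = (u n)⁻¹ - (u 0)⁻¹ := by
    intro n
    rw [← Finset.sum_range_sub (fun m => (u m)⁻¹) n]
    exact Finset.sum_congr rfl fun i _ => (hd_eq i).symm
  have hinv_tendsto : Tendsto (fun n : ℕ => (u n)⁻¹ / (n : ℝ)) atTop (𝓝 (σ2 / 2)) := by
    have h1 : Tendsto (fun n : ℕ => ((n : ℝ))⁻¹ * ((u n)⁻¹ - (u 0)⁻¹)) atTop (𝓝 (σ2 / 2)) := by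
      apply hcesaro.congr
      intro n
      rw [hsum n]
    have h2 : Tendsto (fun n : ℕ => ((n : ℝ))⁻¹ * (u 0)⁻¹) atTop (𝓝 0) := by
      have := tendsto_inv_atTop_nhds_zero_nat.mul_const (u 0)⁻¹
      simpa using this
    have h3 := h1.add h2
    rw [add_zero] at h3
    apply h3.congr
    intro n
    ring
  -- final step
  have hfin : Tendsto (fun n : ℕ => ((u n)⁻¹ / (n : ℝ))⁻¹) atTop (𝓝 (2 / σ2)) := by
    have := hinv_tendsto.inv₀ (by positivity)
    have h5 : (σ2 / 2)⁻¹ = 2 / σ2 := by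
      rw [inv_div]
    rwa [h5] at this
  apply hfin.congr'
  filter_upwards [Filter.eventually_ge_atTop 1] with n hn
  have hn0 : (n : ℝ) ≠ 0 := Nat.cast_ne_zero.2 (by omega)
  have hun : u n ≠ 0 := (hu_pos n).ne'
  rw [hu_def]
  simp only []
  field_simp
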